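/- The group-choice index of the path P_n (n ≥ 3) equals 2 and the group-choice index of the cycle C_n equals 3. -/

import Mathlib

open SimpleGraph

/-- A graph `H` is `k`-group choosable if for every (additive) Abelian group `A` of order at
least `k`, every list assignment giving each vertex a `k`-element subset of `A`, and every
"forbidden difference" function `f` on oriented edges (encoded as an antisymmetric function
on ordered pairs of vertices, which is equivalent to fixing an orientation), there is a list
coloring `c` with `c x - c y ≠ f x y` for every edge `xy`. -/
def GroupChoosable {W : Type} (H : SimpleGraph W) (k : ℕ) : Prop :=
  ∀ (A : Type) [AddCommGroup A] [Fintype A], k ≤ Fintype.card A →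
    ∀ L : W → Finset A, (∀ v, (L v).card = k) →
      ∀ f : W → W → A, (∀ x y, f x y = - f y x) →
        ∃ c : W → A, (∀ v, c v ∈ L v) ∧ ∀ ⦃x y⦄, H.Adj x y → c x - c y ≠ f x y

/-- The group choice number of a graph: the least `k` such that it is `k`-group choosable. -/
noncomputable def groupChoiceNumber {W : Type} (H : SimpleGraph W) : ℕ :=
  sInf {k | GroupChoosable H k}

/-- `G` is edge-`k`-group choosable if its line graph is `k`-group choosable. -/
def EdgeGroupChoosable {V : Type} (G : SimpleGraph V) (k : ℕ) : Prop :=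
  GroupChoosable G.lineGraph k

/-- The group-choice index of `G`: the group choice number of its line graph. -/
noncomputable def groupChoiceIndex {V : Type} (G : SimpleGraph V) : ℕ :=
  groupChoiceNumber G.lineGraph

open Finset

lemma exists_good_coloring {W : Type} [Fintype W] {H : SimpleGraph W} [DecidableRel H.Adj] {k : ℕ}
    (A : Type) [AddCommGroup A] (L : W → Finset A) (hL : ∀ v, k ≤ (L v).card)
    (f : W → W → A) (hf : ∀ x y, f x y = - f y x)
    (ρ : W → ℕ) (hρ : Function.Injective ρ)
    (hdeg : ∀ v : W, (Finset.univ.filter (fun u => H.Adj u v ∧ ρ u < ρ v)).card < k) :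
    ∃ c : W → A, (∀ v, c v ∈ L v) ∧ ∀ ⦃x y⦄, H.Adj x y → c x - c y ≠ f x y := by
  classical
  suffices h : ∀ T : Finset ℕ, ∃ c : W → A, (∀ v, c v ∈ L v) ∧
      ∀ x y, ρ x ∈ T → ρ y ∈ T → H.Adj x y → c x - c y ≠ f x y by
    obtain ⟨c, h1, h2⟩ := h (Finset.univ.image ρ)
    exact ⟨c, h1, fun x y hxy => h2 x y (Finset.mem_image_of_mem ρ (Finset.mem_univ x))
      (Finset.mem_image_of_mem ρ (Finset.mem_univ y)) hxy⟩
  intro T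
  induction T using Finset.induction_on_max with
  | empty =>
    cases isEmpty_or_nonempty W with
    | inl hW => exact ⟨fun v => isEmptyElim v, fun v => isEmptyElim v,
        fun x y hx => absurd hx (Finset.notMem_empty _)⟩
    | inr hW =>
      have hk : 1 ≤ k := Nat.pos_of_ne_zero fun hk0 => by
        have := hdeg (Classical.arbitrary W); omega
      have hne : ∀ v, (L v).Nonempty := fun v => Finset.card_pos.mp (by have := hL v; omega)
      exact ⟨fun v => (hne v).choose, fun v => (hne v).choose_spec,
        fun x y hx => absurd hx (Finset.notMem_empty _)⟩
  | insert a T hmax ih =>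
    obtain ⟨c, hc1, hc2⟩ := ih
    by_cases ha : ∃ v₀ : W, ρ v₀ = a
    · obtain ⟨v₀, rfl⟩ := ha
      set F : Finset A :=
        ((Finset.univ.filter (fun u => H.Adj u v₀ ∧ ρ u ∈ T)).image
          (fun u => f v₀ u + c u)) with hF
      have hFcard : F.card < k := by
        refine lt_of_le_of_lt (Finset.card_image_le.trans (Finset.card_le_card ?_)) (hdeg v₀)
        intro u hu
        rw [Finset.mem_filter] at hu ⊢
        exact ⟨Finset.mem_univ u, hu.2.1, hmax _ hu.2.2⟩
      have hne : (L v₀ \ F).Nonempty := by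
        rw [← Finset.card_pos]
        have h1 := Finset.le_card_sdiff F (L v₀)
        have := hL v₀
        omega
      obtain ⟨b, hb⟩ := hne
      rw [Finset.mem_sdiff] at hb
      have haT : ρ v₀ ∉ T := fun h => lt_irrefl (ρ v₀) (hmax _ h)
      refine ⟨Function.update c v₀ b, ?_, ?_⟩
      · intro v
        by_cases hv : v = v₀
        · subst hv; simpa using hb.1
        · rw [Function.update_of_ne hv]; exact hc1 v
      · intro x y hx hy hxy
        have key : ∀ u, ρ u ∈ T → H.Adj u v₀ → b - c u ≠ f v₀ u := by
          intro u hu hadj hEq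
          exact hb.2 (Finset.mem_image.mpr ⟨u,
            Finset.mem_filter.mpr ⟨Finset.mem_univ u, hadj, hu⟩, by rw [← hEq]; abel⟩)
        have memcase : ∀ z : W, ρ z ∈ insert (ρ v₀) T → z = v₀ ∨ (ρ z ∈ T ∧ z ≠ v₀) := by
          intro z hz
          rcases Finset.mem_insert.mp hz with h | h
          · exact Or.inl (hρ h)
          · exact Or.inr ⟨h, fun hzv => haT (hzv ▸ h)⟩
        rcases memcase x hx with rfl | ⟨hx', hxne⟩
        · rcases memcase y hy with rfl | ⟨hy', hyne⟩
          · exact absurd hxy (H.loopless.irrefl _)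
          · rw [Function.update_self, Function.update_of_ne hyne]
            exact key y hy' (H.adj_symm hxy)
        · rcases memcase y hy with rfl | ⟨hy', hyne⟩
          · rw [Function.update_of_ne hxne, Function.update_self]
            intro hEq
            apply key x hx' hxy
            rw [hf x y] at hEq
            rw [hf y x, ← neg_sub (c x) b, hEq, neg_neg, hf x y, neg_neg]
          · rw [Function.update_of_ne hxne, Function.update_of_ne hyne]
            exact hc2 x y hx' hy' hxy
    · refine ⟨c, hc1, ?_⟩
      intro x y hx hy hxy
      have hx' : ρ x ∈ T := by
        rcases Finset.mem_insert.mp hx with h | h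
        · exact absurd ⟨x, h⟩ ha
        · exact h
      have hy' : ρ y ∈ T := by
        rcases Finset.mem_insert.mp hy with h | h
        · exact absurd ⟨y, h⟩ ha
        · exact h
      exact hc2 x y hx' hy' hxy

lemma path_edge_char {n : ℕ} : ∀ e : Sym2 (Fin n), e ∈ (pathGraph n).edgeSet →
    ∃ u v : Fin n, e = s(u, v) ∧ u.val + 1 = v.val := by
  apply Sym2.ind
  intro u v he
  rw [mem_edgeSet, pathGraph_adj] at he
  rcases he with h | h
  · exact ⟨u, v, rfl, h⟩
  · exact ⟨v, u, Sym2.eq_swap.symm, h⟩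

lemma cycle_edge_char {m : ℕ} : ∀ e : Sym2 (Fin (m+3)), e ∈ (cycleGraph (m+3)).edgeSet →
    ∃ a : Fin (m+3), e = s(a, a+1) := by
  apply Sym2.ind
  intro u v he
  rw [mem_edgeSet, cycleGraph_adj] at he
  rcases he with h | h
  · refine ⟨v, ?_⟩
    have : u = v + 1 := by rw [← h]; open Fin.CommRing in ring
    rw [this, Sym2.eq_swap]
  · refine ⟨u, ?_⟩
    have : v = u + 1 := by rw [← h]; open Fin.CommRing in ring
    rw [this]

lemma path_choosable {n : ℕ} : GroupChoosable (pathGraph n).lineGraph 2 := by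
  intro A _ _ hcard L hL f hf
  classical
  letI : Fintype (pathGraph n).edgeSet := (Set.toFinite _).fintype
  set φ : (pathGraph n).edgeSet → ℕ :=
    fun e => Sym2.lift ⟨fun a b => min a.val b.val, fun a b => min_comm _ _⟩ e.val with hφ
  have hφval : ∀ (u v : Fin n) (h : s(u,v) ∈ (pathGraph n).edgeSet), u.val + 1 = v.val →
      φ ⟨s(u,v), h⟩ = u.val := by
    intro u v h huv
    simp only [hφ, Sym2.lift_mk]
    omega
  have hinj : Function.Injective φ := by
    rintro ⟨e₁, he₁⟩ ⟨e₂, he₂⟩ h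
    obtain ⟨u₁, v₁, rfl, h1⟩ := path_edge_char e₁ he₁
    obtain ⟨u₂, v₂, rfl, h2⟩ := path_edge_char e₂ he₂
    rw [hφval u₁ v₁ he₁ h1, hφval u₂ v₂ he₂ h2] at h
    apply Subtype.ext
    have hu : u₁ = u₂ := Fin.ext h
    subst hu
    have hv : v₁ = v₂ := Fin.ext (by omega)
    exact congrArg (fun x => s(u₁, x)) hv
  apply exists_good_coloring A L (fun v => (hL v).ge) f hf φ hinj
  intro e
  have key : ∀ e' : (pathGraph n).edgeSet,
      (pathGraph n).lineGraph.Adj e' e ∧ φ e' < φ e → φ e' + 1 = φ e := by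
    rintro e' ⟨hadj, hlt'⟩
    obtain ⟨u, v, hev, huv⟩ := path_edge_char e.val e.prop
    obtain ⟨u', v', hev', huv'⟩ := path_edge_char e'.val e'.prop
    have hφe : φ e = u.val := by
      have := hφval u v (hev ▸ e.prop) huv
      rw [← this]
      congr 1
      exact Subtype.ext hev
    have hφe' : φ e' = u'.val := by
      have := hφval u' v' (hev' ▸ e'.prop) huv'
      rw [← this]
      congr 1
      exact Subtype.ext hev'
    rw [hφe, hφe'] at hlt'
    rw [hφe, hφe']
    rw [lineGraph_adj_iff_exists] at hadj
    obtain ⟨hne, w, hw1, hw2⟩ := hadj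
    rw [hev'] at hw1
    rw [hev] at hw2
    rcases Sym2.mem_iff.mp hw1 with rfl | rfl <;> rcases Sym2.mem_iff.mp hw2 with h | h <;>
      have := congrArg Fin.val h <;> omega
  refine lt_of_le_of_lt ?_ (by norm_num : 1 < 2)
  rw [Finset.card_le_one]
  intro e' h' e'' h''
  rw [Finset.mem_filter] at h' h''
  apply hinj
  have k1 := key e' h'.2
  have k2 := key e'' h''.2
  omega

lemma two_ne_zero_fin {m : ℕ} : (2 : Fin (m+3)) ≠ 0 := by
  intro h
  have := congrArg Fin.val h
  rw [Fin.val_zero] at this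
  rw [show ((2 : Fin (m+3)).val = 2) from by
    rw [Fin.val_two]] at this
  omega

lemma one_ne_zero_fin {m : ℕ} : (1 : Fin (m+3)) ≠ 0 := by
  intro h
  have := congrArg Fin.val h
  rw [Fin.val_zero, Fin.val_one] at this
  omega

lemma cycle_edge_mem {m : ℕ} (i : Fin (m+3)) : s(i, i+1) ∈ (cycleGraph (m+3)).edgeSet := by
  rw [mem_edgeSet, cycleGraph_adj]
  right
  open Fin.CommRing in ring

/-- The `i`-th edge of the cycle, as a vertex of the line graph. -/
def cycE {m : ℕ} (i : Fin (m+3)) : (cycleGraph (m+3)).edgeSet := ⟨s(i, i+1), cycle_edge_mem i⟩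

lemma cycE_inj {m : ℕ} : Function.Injective (cycE (m := m)) := by
  intro i j hij
  have h : s(i, i+1) = s(j, j+1) := congrArg Subtype.val hij
  rcases Sym2.eq_iff.mp h with ⟨h1, -⟩ | ⟨h1, h2⟩
  · exact h1
  · exfalso
    apply two_ne_zero_fin (m := m)
    have : i = i + 2 := by
      nth_rewrite 1 [h1]
      rw [← h2]
      open Fin.CommRing in ring
    rw [left_eq_add] at this
    exact this

lemma cycE_adj {m : ℕ} (i : Fin (m+3)) :
    (cycleGraph (m+3)).lineGraph.Adj (cycE i) (cycE (i+1)) := by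
  rw [lineGraph_adj_iff_exists]
  constructor
  · intro h
    have := cycE_inj h
    rw [left_eq_add] at this
    exact one_ne_zero_fin this
  · exact ⟨i+1, Sym2.mem_iff.mpr (Or.inr rfl), Sym2.mem_iff.mpr (Or.inl rfl)⟩

lemma cycle_choosable {m : ℕ} : GroupChoosable (cycleGraph (m+3)).lineGraph 3 := by
  intro A _ _ hcard L hL f hf
  classical
  letI : Fintype (cycleGraph (m+3)).edgeSet := (Set.toFinite _).fintype
  obtain ⟨ρ, hρ⟩ : ∃ ρ : (cycleGraph (m+3)).edgeSet → ℕ, Function.Injective ρ :=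
    ⟨fun e => (Fintype.equivFin _ e).val, fun a b h =>
      (Fintype.equivFin _).injective (Fin.ext h)⟩
  apply exists_good_coloring A L (fun v => (hL v).ge) f hf ρ hρ
  intro e
  refine lt_of_le_of_lt ?_ (by norm_num : 2 < 3)
  obtain ⟨a, hea⟩ := cycle_edge_char e.val e.prop
  have heE : e = cycE a := Subtype.ext hea
  refine le_trans (Finset.card_le_card (?_ :
    _ ⊆ ({cycE (a - 1), cycE (a + 1)} : Finset _))) ?_
  · intro e' h'
    rw [Finset.mem_filter] at h'
    obtain ⟨-, hadj, -⟩ := h'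
    rw [lineGraph_adj_iff_exists] at hadj
    obtain ⟨hne, w, hw1, hw2⟩ := hadj
    obtain ⟨b, heb⟩ := cycle_edge_char e'.val e'.prop
    have heE' : e' = cycE b := Subtype.ext heb
    rw [heE'] at hw1 ⊢
    rw [heE] at hw2
    rw [Finset.mem_insert, Finset.mem_singleton]
    have hbne : b ≠ a := by
      intro h
      exact hne (by rw [heE', heE, h])
    rcases Sym2.mem_iff.mp hw1 with rfl | h1 <;> rcases Sym2.mem_iff.mp hw2 with h2 | h2
    · exact absurd h2 hbne
    · right
      congr 1
    · left
      congr 1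
      exact eq_sub_of_add_eq (h1 ▸ h2)
    · exact absurd (by rw [← add_left_inj 1, ← h1, h2]) hbne
  · exact le_trans (Finset.card_insert_le _ _) (by simp)

lemma not_choosable_zero {W : Type} (H : SimpleGraph W) (w : W) : ¬ GroupChoosable H 0 := by
  intro h
  obtain ⟨c, hc, -⟩ := h (ZMod 1) (Nat.zero_le _) (fun _ => ∅) (fun _ => rfl)
    (fun _ _ => 0) (by intro x y; simp)
  exact absurd (hc w) (Finset.notMem_empty _)

lemma not_choosable_one {W : Type} (H : SimpleGraph W) {x y : W} (hxy : H.Adj x y) :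
    ¬ GroupChoosable H 1 := by
  intro h
  obtain ⟨c, hc, hgood⟩ := h (ZMod 1) (by rw [ZMod.card]) (fun _ => {0}) (fun _ => rfl)
    (fun _ _ => 0) (by intro x y; simp)
  exact hgood hxy (Subsingleton.elim _ _)

lemma zmod2_ne {x y : ZMod 2} (h : x ≠ y) : x = y + 1 := by revert h; revert x y; decide

lemma cycle_not_choosable_two {m : ℕ} : ¬ GroupChoosable (cycleGraph (m+3)).lineGraph 2 := by
  intro hGC
  classical
  have hfanti : ∀ x y : (cycleGraph (m+3)).edgeSet,
      (if (x = cycE 0 ∧ y = cycE 1) ∨ (x = cycE 1 ∧ y = cycE 0) then (m : ZMod 2) else 0) =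
      - (if (y = cycE 0 ∧ x = cycE 1) ∨ (y = cycE 1 ∧ x = cycE 0) then (m : ZMod 2) else 0) := by
    intro x y
    have hneg : ∀ a : ZMod 2, -a = a := by decide
    rw [hneg]
    exact if_congr (by tauto) rfl rfl
  obtain ⟨c, hcmem, hc⟩ := hGC (ZMod 2) (by rw [ZMod.card]) (fun _ => Finset.univ)
    (fun _ => by rw [Finset.card_univ, ZMod.card]) _ hfanti
  set f : (cycleGraph (m+3)).edgeSet → (cycleGraph (m+3)).edgeSet → ZMod 2 := fun x y =>
    (if (x = cycE 0 ∧ y = cycE 1) ∨ (x = cycE 1 ∧ y = cycE 0) then (m : ZMod 2) else 0) with hfdef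
  have step : ∀ i : Fin (m+3), c (cycE i) - c (cycE (i+1)) = f (cycE i) (cycE (i+1)) + 1 :=
    fun i => zmod2_ne (hc (cycE_adj i))
  have hsum0 : ∑ i : Fin (m+3), (c (cycE i) - c (cycE (i+1))) = 0 := by
    rw [Finset.sum_sub_distrib, sub_eq_zero]
    exact (Fintype.sum_equiv (Equiv.addRight (1 : Fin (m+3))) (fun i => c (cycE (i+1)))
      (fun i => c (cycE i)) (fun i => rfl)).symm
  have hterm : ∀ i : Fin (m+3), f (cycE i) (cycE (i+1)) =
      if i = 0 then (m : ZMod 2) else 0 := by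
    intro i
    simp only [hfdef]
    by_cases hi : i = 0
    · subst hi
      rw [if_pos, if_pos rfl]
      left
      exact ⟨rfl, by rw [zero_add]⟩
    · rw [if_neg, if_neg hi]
      rintro (⟨h1, -⟩ | ⟨h1, h2⟩)
      · exact hi (cycE_inj h1)
      · have hi1 : i = 1 := cycE_inj h1
        have hi2 : i + 1 = 0 := cycE_inj h2
        rw [hi1] at hi2
        exact two_ne_zero_fin (by rw [← hi2]; open Fin.CommRing in ring)
  have hsum1 : ∑ i : Fin (m+3), (f (cycE i) (cycE (i+1)) + 1) = (1 : ZMod 2) := by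
    rw [Finset.sum_add_distrib, Finset.sum_congr rfl (fun i _ => hterm i),
      Finset.sum_ite_eq' Finset.univ (0 : Fin (m+3)), if_pos (Finset.mem_univ _),
      Finset.sum_const, Finset.card_univ, Fintype.card_fin, nsmul_eq_mul, mul_one]
    push_cast
    ring_nf
    rw [show ((3 : ZMod 2)) = 1 by decide, show ((2 : ZMod 2)) = 0 by decide]
    ring
  rw [Finset.sum_congr rfl (fun i _ => step i), hsum1] at hsum0
  exact one_ne_zero hsum0

lemma sInf_eq_of_mem {S : Set ℕ} {k : ℕ} (hk : k ∈ S) (hlt : ∀ j < k, j ∉ S) : sInf S = k :=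
  le_antisymm (Nat.sInf_le hk) (by
    by_contra h
    push_neg at h
    exact hlt _ h (Nat.sInf_mem ⟨k, hk⟩))

/-- The group-choice index of the path `P_n` (`n ≥ 3`) is 2 and that of the cycle `C_n`
(`n ≥ 3`) is 3. -/
theorem stmt :
    (∀ n : ℕ, 3 ≤ n → groupChoiceIndex (pathGraph n) = 2) ∧
      (∀ n : ℕ, 3 ≤ n → groupChoiceIndex (cycleGraph n) = 3) := by
  constructor
  · intro n hn
    have h01 : s(⟨0, by omega⟩, ⟨1, by omega⟩) ∈ (pathGraph n).edgeSet := by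
      rw [mem_edgeSet, pathGraph_adj]
      left
      rfl
    have h12 : s(⟨1, by omega⟩, ⟨2, by omega⟩) ∈ (pathGraph n).edgeSet := by
      rw [mem_edgeSet, pathGraph_adj]
      left
      rfl
    have hadj : (pathGraph n).lineGraph.Adj ⟨_, h01⟩ ⟨_, h12⟩ := by
      rw [lineGraph_adj_iff_exists]
      constructor
      · intro h
        have h' : s((⟨0, by omega⟩ : Fin n), (⟨1, by omega⟩ : Fin n)) =
            s((⟨1, by omega⟩ : Fin n), (⟨2, by omega⟩ : Fin n)) := congrArg Subtype.val h
        rcases Sym2.eq_iff.mp h' with ⟨h1, -⟩ | ⟨h1, -⟩ <;>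
          · have := congrArg Fin.val h1
            simp at this
      · exact ⟨⟨1, by omega⟩, Sym2.mem_iff.mpr (Or.inr rfl), Sym2.mem_iff.mpr (Or.inl rfl)⟩
    refine sInf_eq_of_mem path_choosable ?_
    intro j hj hjS
    interval_cases j
    · exact not_choosable_zero _ ⟨_, h01⟩ hjS
    · exact not_choosable_one _ hadj hjS
  · intro n hn
    obtain ⟨m, rfl⟩ : ∃ m, n = m + 3 := ⟨n - 3, by omega⟩
    refine sInf_eq_of_mem cycle_choosable ?_
    intro j hj hjS
    interval_cases j
    · exact not_choosable_zero _ (cycE 0) hjS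
    · exact not_choosable_one _ (cycE_adj 0) hjS
    · exact cycle_not_choosable_two hjS
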